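/- Let f̃(z) = z + φ̃(z) and g̃(z) = z + ψ̃(z) with φ̃, ψ̃ ∈ ℂ[[z⁻¹]]. Then the composition f̃ ∘ g̃ = g̃ + φ̃ ∘ g̃ is well-defined in z + ℂ[[z⁻¹]], where φ̃ ∘ g̃ := φ̃ + Σ_{n≥1} (1/n!) ψ̃ⁿ (d/dz)ⁿ φ̃ is a formally convergent series, and (z + ℂ[[z⁻¹]], ∘) is a group. -/

import Mathlib

open PowerSeries

/-- The derivation `d/dz` on `ℂ[[z⁻¹]]`, with `X` standing for `z⁻¹`:
`(d/dz) X^m = −m X^{m+1}`, i.e. `d/dz = −X² d/dX`. -/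
noncomputable def Dz : PowerSeries ℂ → PowerSeries ℂ :=
  fun f => -(PowerSeries.X ^ 2 * PowerSeries.derivativeFun f)

/-- The sum of a formally summable family: when the orders of `F k` grow at
least linearly in `k`, the coefficient of degree `m` receives contributions
only from `k ≤ m`, so this is the formal sum `Σₖ F k`. -/
noncomputable def formalSum (F : ℕ → PowerSeries ℂ) : PowerSeries ℂ :=
  PowerSeries.mk fun m => ∑ k ∈ Finset.range (m + 1), PowerSeries.coeff m (F k)

/-- The `ℂ[[z⁻¹]]`-part of the composition `(z + φ) ∘ (z + ψ)` of formal
tangent-to-identity diffeomorphisms at `∞`: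
`compPart φ ψ = ψ + Σ_{n≥0} (1/n!) ψⁿ (d/dz)ⁿ φ`, a formally convergent series,
so that `(f̃ ∘ g̃)(z) = z + compPart φ ψ` for `f̃ = z + φ`, `g̃ = z + ψ`. -/
noncomputable def compPart (φ ψ : PowerSeries ℂ) : PowerSeries ℂ :=
  ψ + formalSum fun n => ((n.factorial : ℂ))⁻¹ • (ψ ^ n * Dz^[n] φ)

/-- family is formally summable -/
def Summ (F : ℕ → PowerSeries ℂ) : Prop := ∀ n m : ℕ, m < n → coeff m (F n) = 0

lemma coeff_formalSum (F : ℕ → PowerSeries ℂ) (m : ℕ) :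
    coeff m (formalSum F) = ∑ k ∈ Finset.range (m + 1), coeff m (F k) := by
  simp [formalSum]

lemma coeff_formalSum' (F : ℕ → PowerSeries ℂ) (hF : Summ F) {m N : ℕ} (h : m < N) :
    coeff m (formalSum F) = ∑ k ∈ Finset.range N, coeff m (F k) := by
  rw [coeff_formalSum]
  apply Finset.sum_subset
  · intro k hk; simp only [Finset.mem_range] at *; omega
  · intro k _ hk
    simp only [Finset.mem_range] at hk
    exact hF k m (by omega)

lemma formalSum_add (F G : ℕ → PowerSeries ℂ) :
    formalSum (fun n => F n + G n) = formalSum F + formalSum G := by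
  ext m
  simp [coeff_formalSum, Finset.sum_add_distrib]

lemma formalSum_zero : formalSum (fun _ => (0 : PowerSeries ℂ)) = 0 := by
  ext m; simp [coeff_formalSum]

lemma mul_formalSum (g : PowerSeries ℂ) (F : ℕ → PowerSeries ℂ) (hF : Summ F) :
    g * formalSum F = formalSum (fun n => g * F n) := by
  ext m
  rw [coeff_formalSum, coeff_mul]
  have : ∀ p ∈ Finset.HasAntidiagonal.antidiagonal m,
      coeff p.1 g * coeff p.2 (formalSum F)
        = ∑ k ∈ Finset.range (m + 1), coeff p.1 g * coeff p.2 (F k) := by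
    intro p hp
    rw [Finset.HasAntidiagonal.mem_antidiagonal] at hp
    rw [coeff_formalSum' F hF (N := m + 1) (by omega), Finset.mul_sum]
  rw [Finset.sum_congr rfl this, Finset.sum_comm]
  refine Finset.sum_congr rfl fun k _ => ?_
  rw [coeff_mul]

lemma formalSum_shift (F : ℕ → PowerSeries ℂ) (hF : Summ F) :
    formalSum F = F 0 + formalSum (fun n => F (n + 1)) := by
  ext m
  rw [map_add, coeff_formalSum, coeff_formalSum, Finset.sum_range_succ']
  rw [add_comm]
  congr 1
  rw [Finset.sum_range_succ, hF (m + 1) m (by omega), add_zero]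

lemma formalSum_smul (c : ℂ) (F : ℕ → PowerSeries ℂ) :
    formalSum (fun n => c • F n) = c • formalSum F := by
  ext m
  simp [coeff_formalSum, Finset.mul_sum]

lemma coeff_pow_eq_zero {w : PowerSeries ℂ} (hw : coeff 0 w = 0) {k m : ℕ} (h : m < k) :
    coeff m (w ^ k) = 0 := by
  have : (X : PowerSeries ℂ) ∣ w := X_dvd_iff.2 (by simpa using hw)
  obtain ⟨v, rfl⟩ := this
  rw [mul_pow, coeff_X_pow_mul' (v ^ k) k m, if_neg (by omega)]

lemma coeff_Dz (f : PowerSeries ℂ) (m : ℕ) :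
    coeff m (Dz f) = -(((m - 1 : ℕ) : ℂ) * coeff (m - 1) f) := by
  simp only [Dz, map_neg, coeff_X_pow_mul' f.derivativeFun 2 m]
  rcases m with _ | _ | m
  · simp
  · simp
  · have h : 2 ≤ m + 2 := by omega
    rw [if_pos h]
    have : m + 2 - 2 = m := by omega
    rw [this, show f.derivativeFun = derivative ℂ f from rfl, coeff_derivative]
    have : m + 2 - 1 = m + 1 := by omega
    rw [this]
    push_cast
    ring

lemma coeff_Dz_iter (f : PowerSeries ℂ) (n m : ℕ) :
    coeff m (Dz^[n] f)
      = (-1) ^ n * ((m - 1).descFactorial n : ℂ) * coeff (m - n) f := by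
  induction n generalizing m f with
  | zero => simp
  | succ n ih =>
    rw [Function.iterate_succ_apply, ih (Dz f) m, coeff_Dz]
    rw [Nat.descFactorial_succ]
    have h1 : m - n - 1 = m - 1 - n := by omega
    have h2 : m - (n + 1) = m - n - 1 := by omega
    rw [h2, ← h1]
    push_cast
    ring

noncomputable def subS (w φ : PowerSeries ℂ) : PowerSeries ℂ :=
  formalSum fun k => coeff k φ • w ^ k

lemma summ_subS {w : PowerSeries ℂ} (hw : coeff 0 w = 0) (φ : PowerSeries ℂ) :
    Summ fun k => coeff k φ • w ^ k := by
  intro n m h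
  rw [map_smul, coeff_pow_eq_zero hw h, smul_zero]

lemma coeff_subS {w : PowerSeries ℂ} (φ : PowerSeries ℂ) (m : ℕ) :
    coeff m (subS w φ) = ∑ k ∈ Finset.range (m + 1), coeff k φ * coeff m (w ^ k) := by
  rw [subS, coeff_formalSum]
  simp [smul_eq_mul]

lemma coeff_subS' {w : PowerSeries ℂ} (hw : coeff 0 w = 0) (φ : PowerSeries ℂ)
    {m N : ℕ} (h : m < N) :
    coeff m (subS w φ) = ∑ k ∈ Finset.range N, coeff k φ * coeff m (w ^ k) := by
  rw [subS, coeff_formalSum' _ (summ_subS hw φ) h]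
  simp [smul_eq_mul]

lemma coeff_zero_subS {w : PowerSeries ℂ} (φ : PowerSeries ℂ) :
    coeff 0 (subS w φ) = coeff 0 φ := by
  rw [coeff_subS]
  simp

lemma subS_add (w φ χ : PowerSeries ℂ) : subS w (φ + χ) = subS w φ + subS w χ := by
  ext m
  simp [coeff_subS, Finset.sum_add_distrib, add_mul]

lemma subS_one (w : PowerSeries ℂ) : subS w 1 = 1 := by
  ext m
  rw [coeff_subS, Finset.sum_eq_single 0]
  · simp [coeff_one]
  · intro k _ hk
    rw [coeff_one, if_neg hk, zero_mul]
  · intro h; simp at h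

lemma subS_X {w : PowerSeries ℂ} (hw : coeff 0 w = 0) : subS w X = w := by
  ext m
  rw [coeff_subS, Finset.sum_eq_single 1]
  · simp
  · intro k _ hk
    rw [coeff_X, if_neg hk, zero_mul]
  · intro h
    simp only [Finset.mem_range] at h
    have hm : m = 0 := by omega
    subst hm
    simpa using hw

lemma subS_mul {w : PowerSeries ℂ} (hw : coeff 0 w = 0) (φ χ : PowerSeries ℂ) :
    subS w (φ * χ) = subS w φ * subS w χ := by
  ext m
  have key : ∀ p : ℕ × ℕ, p.1 + p.2 ≤ m →
      coeff m (w ^ (p.1 + p.2)) = coeff m (w ^ p.1 * w ^ p.2) := by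
    intro p _; rw [pow_add]
  -- RHS
  have hR : coeff m (subS w φ * subS w χ)
      = ∑ p ∈ Finset.range (m + 1) ×ˢ Finset.range (m + 1),
          coeff p.1 φ * coeff p.2 χ * coeff m (w ^ (p.1 + p.2)) := by
    rw [coeff_mul]
    have : ∀ q ∈ Finset.HasAntidiagonal.antidiagonal m,
        coeff q.1 (subS w φ) * coeff q.2 (subS w χ)
          = ∑ p ∈ Finset.range (m + 1) ×ˢ Finset.range (m + 1),
              coeff p.1 φ * coeff p.2 χ * (coeff q.1 (w ^ p.1) * coeff q.2 (w ^ p.2)) := by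
      intro q hq
      rw [Finset.HasAntidiagonal.mem_antidiagonal] at hq
      rw [coeff_subS' hw φ (N := m + 1) (by omega), coeff_subS' hw χ (N := m + 1) (by omega),
        Finset.sum_mul_sum, ← Finset.sum_product']
      apply Finset.sum_congr rfl
      intro p _
      ring
    rw [Finset.sum_congr rfl this, Finset.sum_comm]
    apply Finset.sum_congr rfl
    intro p _
    rw [pow_add, coeff_mul, Finset.mul_sum]
  rw [hR, coeff_subS]
  -- LHS: triangle sum
  have hT : ∀ k ∈ Finset.range (m + 1),
      coeff k (φ * χ) * coeff m (w ^ k)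
        = ∑ p ∈ Finset.HasAntidiagonal.antidiagonal k, coeff p.1 φ * coeff p.2 χ * coeff m (w ^ (p.1 + p.2)) := by
    intro k _
    rw [coeff_mul, Finset.sum_mul]
    apply Finset.sum_congr rfl
    intro p hp
    rw [Finset.HasAntidiagonal.mem_antidiagonal] at hp
    rw [hp]
  rw [Finset.sum_congr rfl hT, ← Finset.sum_biUnion]
  · apply Finset.sum_subset
    · intro p hp
      simp only [Finset.mem_biUnion, Finset.mem_range, Finset.HasAntidiagonal.mem_antidiagonal] at hp
      obtain ⟨k, hk, hpk⟩ := hp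
      simp only [Finset.mem_product, Finset.mem_range]
      omega
    · intro p hp hnp
      have : m < p.1 + p.2 := by
        by_contra h
        push_neg at h
        exact hnp (Finset.mem_biUnion.2 ⟨p.1 + p.2, Finset.mem_range.2 (by omega),
          Finset.HasAntidiagonal.mem_antidiagonal.2 rfl⟩)
      rw [coeff_pow_eq_zero hw this, mul_zero]
  · intro a _ b _ hab
    simp only [Function.onFun, Finset.disjoint_left, Finset.HasAntidiagonal.mem_antidiagonal]
    intro p h1 h2
    exact hab (h1 ▸ h2)

lemma subS_pow {w : PowerSeries ℂ} (hw : coeff 0 w = 0) (φ : PowerSeries ℂ) (n : ℕ) :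
    subS w (φ ^ n) = (subS w φ) ^ n := by
  induction n with
  | zero => simpa using subS_one w
  | succ n ih => rw [pow_succ, subS_mul hw, ih, pow_succ]

lemma subS_comp {v w : PowerSeries ℂ} (hv : coeff 0 v = 0) (hw : coeff 0 w = 0)
    (φ : PowerSeries ℂ) :
    subS v (subS w φ) = subS (subS v w) φ := by
  ext m
  have hvw : coeff 0 (subS v w) = 0 := by rw [coeff_zero_subS]; exact hw
  rw [coeff_subS' hv _ (N := m + 1) (by omega), coeff_subS' hvw _ (N := m + 1) (by omega)]
  have h1 : ∀ k ∈ Finset.range (m + 1),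
      coeff k (subS w φ) * coeff m (v ^ k)
        = ∑ j ∈ Finset.range (m + 1), coeff j φ * coeff k (w ^ j) * coeff m (v ^ k) := by
    intro k hk
    simp only [Finset.mem_range] at hk
    rw [coeff_subS' hw φ (N := m + 1) (by omega), Finset.sum_mul]
  have h2 : ∀ j ∈ Finset.range (m + 1),
      coeff j φ * coeff m ((subS v w) ^ j)
        = ∑ k ∈ Finset.range (m + 1), coeff j φ * (coeff k (w ^ j) * coeff m (v ^ k)) := by
    intro j _
    rw [← subS_pow hv w j, coeff_subS' hv _ (N := m + 1) (by omega), Finset.mul_sum]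
  rw [Finset.sum_congr rfl h1, Finset.sum_congr rfl h2, Finset.sum_comm]
  apply Finset.sum_congr rfl; intro k _
  apply Finset.sum_congr rfl; intro j _
  ring

-- the family `F j n = (-1)^n C(j+n-1, n) X^(j+n) ψ^n`, i.e. `(X(1+Xψ)⁻¹)^j`
noncomputable def FF (ψ : PowerSeries ℂ) (j n : ℕ) : PowerSeries ℂ :=
  (((-1 : ℂ)) ^ n * ((j + n - 1).choose n : ℂ)) • (X ^ (j + n) * ψ ^ n)

noncomputable def Wc (σ : PowerSeries ℂ) : PowerSeries ℂ := formalSum (FF σ 1)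

lemma coeff_smul_X_pow_mul_zero (c : ℂ) (f : PowerSeries ℂ) {k m : ℕ} (h : m < k) :
    coeff m (c • (X ^ k * f)) = 0 := by
  rw [map_smul, coeff_X_pow_mul' f k m, if_neg (by omega), smul_zero]

lemma summ_FF (ψ : PowerSeries ℂ) (j : ℕ) : Summ (FF ψ j) := by
  intro n m h
  exact coeff_smul_X_pow_mul_zero _ _ (by omega)

lemma formalSum_sub (F G : ℕ → PowerSeries ℂ) :
    formalSum (fun n => F n - G n) = formalSum F - formalSum G := by
  ext m
  simp [coeff_formalSum, Finset.sum_sub_distrib]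

lemma FF_zero (ψ : PowerSeries ℂ) : formalSum (FF ψ 0) = 1 := by
  ext m
  rw [coeff_formalSum, Finset.sum_eq_single 0]
  · simp [FF]
  · intro k _ hk
    have h0 : (k - 1).choose k = 0 := Nat.choose_eq_zero_of_lt (by omega)
    simp [FF, h0]
  · intro h; simp at h

lemma coeff_zero_Wc (σ : PowerSeries ℂ) : coeff 0 (Wc σ) = 0 := by
  rw [Wc, coeff_formalSum]
  simp [FF, coeff_X_pow_mul']

lemma FF_step (ψ : PowerSeries ℂ) (j : ℕ) :
    (1 + X * ψ) * formalSum (FF ψ (j + 1)) = X * formalSum (FF ψ j) := by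
  set G : ℕ → PowerSeries ℂ := fun n => FF ψ (j + 1) n - X * FF ψ j n with hG
  have hG0 : G 0 = 0 := by
    simp only [hG, FF]
    norm_num
    ring
  have hsummG : Summ G := by
    intro n m h
    rw [hG]
    simp only [map_sub]
    rw [summ_FF ψ (j + 1) n m h, zero_sub, neg_eq_zero]
    rcases Nat.lt_or_ge m 1 with h1 | h1
    · interval_cases m
      rcases Nat.eq_zero_or_pos (j + n) with h2 | h2
      · omega
      · rw [show (X : PowerSeries ℂ) * FF ψ j n = X^1 * FF ψ j n by ring,
          coeff_X_pow_mul' (FF ψ j n) 1 0, if_neg (by omega)]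
    · rw [show (X : PowerSeries ℂ) * FF ψ j n = X^1 * FF ψ j n by ring,
        coeff_X_pow_mul' (FF ψ j n) 1 m, if_pos (by omega)]
      exact summ_FF ψ j n (m - 1) (by omega)
  have hc2 : ∀ n, (X * ψ) * FF ψ (j + 1) n = -G (n + 1) := by
    intro n
    simp only [hG, FF]
    have e1 : j + 1 + n - 1 = j + n := by omega
    have e2 : j + 1 + (n + 1) - 1 = j + n + 1 := by omega
    have e3 : j + (n + 1) - 1 = j + n := by omega
    rw [e1, e2, e3]
    have pascal : ((j + n + 1).choose (n + 1) : ℂ)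
        = ((j + n).choose n : ℂ) + ((j + n).choose (n + 1) : ℂ) := by
      rw [← Nat.cast_add, ← Nat.choose_succ_succ]
    simp only [smul_eq_C_mul, pascal, map_add, map_mul, map_pow, map_neg, map_one]
    ring
  have expand : (fun n => FF ψ (j + 1) n + (X * ψ) * FF ψ (j + 1) n)
      = fun n => (G n + X * FF ψ j n) - G (n + 1) := by
    funext n
    rw [hc2 n, hG]
    ring
  calc (1 + X * ψ) * formalSum (FF ψ (j + 1))
      = formalSum (FF ψ (j + 1)) + (X * ψ) * formalSum (FF ψ (j + 1)) := by ring
    _ = formalSum (fun n => FF ψ (j + 1) n + (X * ψ) * FF ψ (j + 1) n) := by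
        rw [mul_formalSum _ _ (summ_FF ψ (j + 1)), formalSum_add]
    _ = formalSum (fun n => (G n + X * FF ψ j n) - G (n + 1)) := by rw [expand]
    _ = (formalSum G + formalSum (fun n => X * FF ψ j n)) - formalSum (fun n => G (n + 1)) := by
        rw [← formalSum_add, ← formalSum_sub]
    _ = X * formalSum (FF ψ j) := by
        rw [← mul_formalSum _ _ (summ_FF ψ j)]
        have := formalSum_shift G hsummG
        rw [hG0, zero_add] at this
        rw [← this]
        ring

lemma one_add_ne (σ : PowerSeries ℂ) (j : ℕ) : ((1 + X * σ) ^ j : PowerSeries ℂ) ≠ 0 := by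
  intro h
  have : constantCoeff ((1 + X * σ) ^ j) = 0 := by rw [h]; simp
  rw [map_pow, map_add, map_mul, constantCoeff_X, zero_mul, add_zero, map_one, one_pow] at this
  exact one_ne_zero this

lemma PJ (ψ : PowerSeries ℂ) (j : ℕ) :
    (1 + X * ψ) ^ j * formalSum (FF ψ j) = X ^ j := by
  induction j with
  | zero => simpa using FF_zero ψ
  | succ j ih =>
    calc (1 + X * ψ) ^ (j + 1) * formalSum (FF ψ (j + 1))
        = (1 + X * ψ) ^ j * ((1 + X * ψ) * formalSum (FF ψ (j + 1))) := by ring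
      _ = (1 + X * ψ) ^ j * (X * formalSum (FF ψ j)) := by rw [FF_step]
      _ = X * ((1 + X * ψ) ^ j * formalSum (FF ψ j)) := by ring
      _ = X ^ (j + 1) := by rw [ih]; ring

lemma WB (σ : PowerSeries ℂ) : (1 + X * σ) * Wc σ = X := by
  have := PJ σ 1
  simpa [Wc] using this

lemma Wc_unique {σ w : PowerSeries ℂ} (h : (1 + X * σ) * w = X) : w = Wc σ := by
  have h2 := WB σ
  have := one_add_ne σ 1
  rw [pow_one] at this
  exact mul_left_cancel₀ this (by rw [h, h2])

lemma Wc_pow (ψ : PowerSeries ℂ) (j : ℕ) : (Wc ψ) ^ j = formalSum (FF ψ j) := by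
  apply mul_left_cancel₀ (one_add_ne ψ j)
  rw [PJ, ← mul_pow, WB]

noncomputable def Tmap (ψ φ : PowerSeries ℂ) : PowerSeries ℂ :=
  formalSum fun n => ((n.factorial : ℂ))⁻¹ • (ψ ^ n * Dz^[n] φ)


lemma square_reindex (m : ℕ) (f g : ℕ × ℕ → ℂ)
    (hfg : ∀ p : ℕ × ℕ, p.1 ≤ m → p.2 ≤ m → p.1 + p.2 ≤ m → f p = g (m - p.2 - p.1, p.1))
    (hf0 : ∀ p : ℕ × ℕ, p.1 ≤ m → p.2 ≤ m → m < p.1 + p.2 → f p = 0)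
    (hg0 : ∀ q : ℕ × ℕ, q.1 ≤ m → q.2 ≤ m → m < q.1 + q.2 → g q = 0) :
    ∑ p ∈ Finset.range (m + 1) ×ˢ Finset.range (m + 1), f p
      = ∑ q ∈ Finset.range (m + 1) ×ˢ Finset.range (m + 1), g q := by
  have e1 : ∑ p ∈ (Finset.range (m + 1) ×ˢ Finset.range (m + 1)).filter
      (fun p => p.1 + p.2 ≤ m), f p
      = ∑ p ∈ Finset.range (m + 1) ×ˢ Finset.range (m + 1), f p := by
    refine Finset.sum_subset (Finset.filter_subset _ _) ?_
    intro p hp hnp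
    simp only [Finset.mem_filter, Finset.mem_product, Finset.mem_range] at hp hnp
    exact hf0 p (by omega) (by omega) (by omega)
  have e3 : ∑ q ∈ (Finset.range (m + 1) ×ˢ Finset.range (m + 1)).filter
      (fun q => q.1 + q.2 ≤ m), g q
      = ∑ q ∈ Finset.range (m + 1) ×ˢ Finset.range (m + 1), g q := by
    refine Finset.sum_subset (Finset.filter_subset _ _) ?_
    intro q hq hnq
    simp only [Finset.mem_filter, Finset.mem_product, Finset.mem_range] at hq hnq
    exact hg0 q (by omega) (by omega) (by omega)
  rw [← e1, ← e3]
  refine Finset.sum_nbij' (fun p => (m - p.2 - p.1, p.1)) (fun q => (q.2, m - q.1 - q.2))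
    ?_ ?_ ?_ ?_ ?_
  · intro p hp
    simp only [Finset.mem_filter, Finset.mem_product, Finset.mem_range] at hp ⊢
    omega
  · intro q hq
    simp only [Finset.mem_filter, Finset.mem_product, Finset.mem_range] at hq ⊢
    omega
  · intro p hp
    simp only [Finset.mem_filter, Finset.mem_product, Finset.mem_range] at hp
    have h : m - (m - p.2 - p.1) - p.1 = p.2 := by omega
    simp [h]
  · intro q hq
    simp only [Finset.mem_filter, Finset.mem_product, Finset.mem_range] at hq
    have h : m - (m - q.1 - q.2) - q.2 = q.1 := by omega
    simp [h]
  · intro p hp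
    simp only [Finset.mem_filter, Finset.mem_product, Finset.mem_range] at hp
    exact hfg p (by omega) (by omega) (by omega)

lemma KEY1 (ψ φ : PowerSeries ℂ) : Tmap ψ φ = subS (Wc ψ) φ := by
  ext m
  -- LHS as a double sum over the square
  have hL : coeff m (Tmap ψ φ)
      = ∑ p ∈ Finset.range (m + 1) ×ˢ Finset.range (m + 1),
          ((p.1.factorial : ℂ))⁻¹ * (coeff p.2 (ψ ^ p.1) *
            ((-1) ^ p.1 * ((m - p.2 - 1).descFactorial p.1 : ℂ) * coeff (m - p.2 - p.1) φ)) := by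
    rw [Tmap, coeff_formalSum, Finset.sum_product]
    apply Finset.sum_congr rfl
    intro n _
    rw [map_smul, smul_eq_mul, coeff_mul,
      Finset.Nat.sum_antidiagonal_eq_sum_range_succ
        (fun a b => coeff a (ψ ^ n) * coeff b (Dz^[n] φ)) m, Finset.mul_sum]
    apply Finset.sum_congr rfl
    intro a _
    rw [coeff_Dz_iter]
  -- RHS as a double sum over the square
  have hR : coeff m (subS (Wc ψ) φ)
      = ∑ q ∈ Finset.range (m + 1) ×ˢ Finset.range (m + 1),
          coeff q.1 φ * (((-1 : ℂ)) ^ q.2 * ((q.1 + q.2 - 1).choose q.2 : ℂ)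
            * (if q.1 + q.2 ≤ m then coeff (m - (q.1 + q.2)) (ψ ^ q.2) else 0)) := by
    rw [coeff_subS, Finset.sum_product]
    apply Finset.sum_congr rfl
    intro j _
    rw [Wc_pow, coeff_formalSum, Finset.mul_sum]
    apply Finset.sum_congr rfl
    intro n _
    rw [FF, map_smul, smul_eq_mul, coeff_X_pow_mul' (ψ ^ n) (j + n) m]
  rw [hL, hR]
  exact square_reindex m _ _
    (by
      intro p h1 h2 h3
      dsimp only
      rw [if_pos (show (m - p.2 - p.1) + p.1 ≤ m by omega)]
      rw [show m - ((m - p.2 - p.1) + p.1) = p.2 by omega,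
        show (m - p.2 - p.1) + p.1 - 1 = m - p.2 - 1 by omega]
      have hdc : ((m - p.2 - 1).descFactorial p.1 : ℂ)
          = (p.1.factorial : ℂ) * ((m - p.2 - 1).choose p.1 : ℂ) := by
        rw [← Nat.cast_mul, ← Nat.descFactorial_eq_factorial_mul_choose]
      rw [hdc]
      have hfac : (p.1.factorial : ℂ) ≠ 0 := by
        exact_mod_cast Nat.factorial_ne_zero p.1
      field_simp)
    (by
      intro p h1 h2 h3
      have hdesc : (m - p.2 - 1).descFactorial p.1 = 0 :=
        Nat.descFactorial_eq_zero_iff_lt.2 (by omega)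
      simp [hdesc])
    (by
      intro q h1 h2 h3
      rw [if_neg (by omega)]
      simp)

lemma compPart_eq (φ ψ : PowerSeries ℂ) : compPart φ ψ = ψ + Tmap ψ φ := rfl

-- the crucial composition identity for W
lemma Wc_comp (ψ χ : PowerSeries ℂ) : subS (Wc χ) (Wc ψ) = Wc (compPart ψ χ) := by
  have hA : coeff 0 (Wc χ) = 0 := coeff_zero_Wc χ
  have hB : coeff 0 (Wc ψ) = 0 := coeff_zero_Wc ψ
  have hWB : (1 + X * χ) * Wc χ = X := WB χ
  -- apply subS (Wc χ) to `(1 + X ψ) Wc ψ = X`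
  have star : (1 + Wc χ * subS (Wc χ) ψ) * subS (Wc χ) (Wc ψ) = Wc χ := by
    have := congrArg (subS (Wc χ)) (WB ψ)
    rw [subS_mul hA, subS_add, subS_one, subS_mul hA, subS_X hA] at this
    exact this
  have goal : (1 + X * (χ + subS (Wc χ) ψ)) * subS (Wc χ) (Wc ψ) = X := by
    calc (1 + X * (χ + subS (Wc χ) ψ)) * subS (Wc χ) (Wc ψ)
        = (1 + X * χ) * ((1 + Wc χ * subS (Wc χ) ψ) * subS (Wc χ) (Wc ψ)) := by
          linear_combination (-(subS (Wc χ) ψ * subS (Wc χ) (Wc ψ))) * hWB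
      _ = (1 + X * χ) * Wc χ := by rw [star]
      _ = X := hWB
  have := Wc_unique goal
  rw [this, compPart_eq, KEY1]

lemma Tmap_comp (ψ χ φ : PowerSeries ℂ) :
    Tmap χ (Tmap ψ φ) = Tmap (compPart ψ χ) φ := by
  rw [KEY1, KEY1, KEY1, subS_comp (coeff_zero_Wc χ) (coeff_zero_Wc ψ), Wc_comp]

lemma Tmap_add (χ ψ T : PowerSeries ℂ) : Tmap χ (ψ + T) = Tmap χ ψ + Tmap χ T := by
  rw [KEY1, KEY1, KEY1, subS_add]

lemma subS_zero (w : PowerSeries ℂ) : subS w 0 = 0 := by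
  ext m
  rw [coeff_subS]
  simp

lemma subS_X_id (φ : PowerSeries ℂ) : subS X φ = φ := by
  ext m
  rw [coeff_subS, Finset.sum_eq_single m]
  · simp
  · intro k _ hk
    rw [coeff_X_pow, if_neg (fun h => hk h.symm), mul_zero]
  · intro h; simp at h

lemma Wc_zero : Wc 0 = X := (Wc_unique (σ := 0) (by ring)).symm

lemma Tmap_zero_left (φ : PowerSeries ℂ) : Tmap 0 φ = φ := by
  rw [KEY1, Wc_zero, subS_X_id]

lemma Tmap_zero_right (ψ : PowerSeries ℂ) : Tmap ψ 0 = 0 := by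
  rw [KEY1, subS_zero]

lemma compPart_zero_right (φ : PowerSeries ℂ) : compPart φ 0 = φ := by
  rw [compPart_eq, Tmap_zero_left, zero_add]

lemma compPart_zero_left (φ : PowerSeries ℂ) : compPart 0 φ = φ := by
  rw [compPart_eq, Tmap_zero_right, add_zero]

lemma compPart_assoc (φ ψ χ : PowerSeries ℂ) :
    compPart (compPart φ ψ) χ = compPart φ (compPart ψ χ) := by
  rw [compPart_eq φ ψ, compPart_eq _ χ, Tmap_add, compPart_eq φ (compPart ψ χ),
    Tmap_comp, compPart_eq ψ χ]
  ring

/-- coefficients of powers only depend on lower coefficients -/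
lemma coeff_pow_congr {ψ₁ ψ₂ : PowerSeries ℂ} {m : ℕ}
    (h : ∀ i < m, coeff i ψ₁ = coeff i ψ₂) (n : ℕ) :
    ∀ a < m, coeff a (ψ₁ ^ n) = coeff a (ψ₂ ^ n) := by
  induction n with
  | zero => intro a _; simp
  | succ n ih =>
    intro a ha
    rw [pow_succ, pow_succ, coeff_mul, coeff_mul]
    apply Finset.sum_congr rfl
    intro p hp
    rw [Finset.HasAntidiagonal.mem_antidiagonal] at hp
    rw [ih p.1 (by omega), h p.2 (by omega)]

lemma coeff_term_congr {ψ₁ ψ₂ φ : PowerSeries ℂ} {m : ℕ}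
    (h : ∀ i < m, coeff i ψ₁ = coeff i ψ₂) (n : ℕ) :
    coeff m (ψ₁ ^ (n + 1) * Dz^[n + 1] φ) = coeff m (ψ₂ ^ (n + 1) * Dz^[n + 1] φ) := by
  rw [coeff_mul, coeff_mul]
  apply Finset.sum_congr rfl
  intro p hp
  rw [Finset.HasAntidiagonal.mem_antidiagonal] at hp
  rcases Nat.eq_zero_or_pos p.2 with h2 | h2
  · rw [h2, coeff_Dz_iter]
    simp [Nat.descFactorial]
  · rw [coeff_pow_congr h (n + 1) p.1 (by omega)]

noncomputable def invC (φ : PowerSeries ℂ) : ℕ → ℂ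
  | m => -(coeff m φ) - ∑ n ∈ Finset.range m, (((n + 1).factorial : ℂ))⁻¹ *
      coeff m ((PowerSeries.mk fun k => if h : k < m then invC φ k else 0) ^ (n + 1)
        * Dz^[n + 1] φ)
  termination_by m => m
  decreasing_by exact h

lemma rightInv (φ : PowerSeries ℂ) : compPart φ (PowerSeries.mk (invC φ)) = 0 := by
  set ψ := PowerSeries.mk (invC φ) with hψ
  ext m
  rw [compPart, map_add, coeff_formalSum, map_zero]
  have hagree : ∀ i < m, coeff i (PowerSeries.mk fun k => if h : k < m then invC φ k else 0)
      = coeff i ψ := by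
    intro i hi
    rw [hψ, coeff_mk, coeff_mk, dif_pos hi]
  have expand : ∑ k ∈ Finset.range (m + 1), coeff m
        ((k.factorial : ℂ)⁻¹ • (ψ ^ k * Dz^[k] φ))
      = coeff m φ + ∑ n ∈ Finset.range m, (((n + 1).factorial : ℂ))⁻¹ *
          coeff m ((PowerSeries.mk fun k => if h : k < m then invC φ k else 0) ^ (n + 1)
            * Dz^[n + 1] φ) := by
    rw [Finset.sum_range_succ', add_comm]
    congr 1
    · simp
    · apply Finset.sum_congr rfl
      intro n _
      rw [map_smul, smul_eq_mul, coeff_term_congr (fun i hi => (hagree i hi).symm) n]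
  rw [expand, hψ, coeff_mk, invC]
  ring
lemma invC_eq (φ : PowerSeries ℂ) (m : ℕ) : invC φ m = -(coeff m φ) - ∑ n ∈ Finset.range m, (((n + 1).factorial : ℂ))⁻¹ *
      coeff m ((PowerSeries.mk fun k => if h : k < m then invC φ k else 0) ^ (n + 1)
        * Dz^[n + 1] φ) := by rw [invC]

/-- `(z + ℂ[[z⁻¹]], ∘)` is a group: composition (which is well defined via the
formally convergent series `φ̃ ∘ g̃ = φ̃ + Σ_{n≥1} (1/n!) ψ̃ⁿ (d/dz)ⁿ φ̃`) has
`z` (i.e. `0` as `ℂ[[z⁻¹]]`-part) as a two-sided identity, is associative, and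
every element has a two-sided inverse. -/
theorem formal_diffeos_group :
    (∀ φ : PowerSeries ℂ, compPart φ 0 = φ ∧ compPart 0 φ = φ) ∧
    (∀ φ ψ χ : PowerSeries ℂ,
      compPart (compPart φ ψ) χ = compPart φ (compPart ψ χ)) ∧
    (∀ φ : PowerSeries ℂ, ∃ ψ : PowerSeries ℂ,
      compPart φ ψ = 0 ∧ compPart ψ φ = 0) := by
  refine ⟨fun φ => ⟨compPart_zero_right φ, compPart_zero_left φ⟩, compPart_assoc, ?_⟩
  intro φ
  set ψ := PowerSeries.mk (invC φ) with hψdef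
  have hψ : compPart φ ψ = 0 := rightInv φ
  set χ := PowerSeries.mk (invC ψ) with hχdef
  have hχ : compPart ψ χ = 0 := rightInv ψ
  refine ⟨ψ, hψ, ?_⟩
  calc compPart ψ φ
      = compPart (compPart ψ φ) (compPart ψ χ) := by rw [hχ, compPart_zero_right]
    _ = compPart ψ (compPart φ (compPart ψ χ)) := by rw [compPart_assoc]
    _ = compPart ψ (compPart (compPart φ ψ) χ) := by rw [compPart_assoc]
    _ = compPart ψ χ := by rw [hψ, compPart_zero_left]
    _ = 0 := hχ
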